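/- Let n ∈ ℕ and suppose for each k ∈ {1,…,n} there are f⁽ⁿ'ᵏ⁾ ∈ Y* with [A*f⁽ⁿ'ᵏ⁾]_l = δ_{kl} for l ∈ {1,…,n} and ∑_{k=1}^n |[A*f⁽ⁿ'ᵏ⁾]_l| ≤ c for all l > n, with c ∈ [0,1). Then for every sign sequence ξ supported in {1,…,n}, the element η = ∑_{k∈supp ξ} ξ_k f⁽ⁿ'ᵏ⁾ satisfies P_{supp ξ}A*η = ξ, ‖(I − P_{supp ξ})A*η‖_∞ ≤ c, and ‖η‖_{Y*} ≤ ∑_{k=1}^n ‖f⁽ⁿ'ᵏ⁾‖_{Y*}. -/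

import Mathlib

noncomputable section

abbrev L1 : Type := lp (fun _ : ℕ => ℝ) 1

def e (k : ℕ) : L1 := lp.single 1 k 1

def SignIn (ξ : ℕ → ℝ) (M : Finset ℕ) : Prop :=
  (∀ k, ξ k = -1 ∨ ξ k = 0 ∨ ξ k = 1) ∧ ∀ k ∉ M, ξ k = 0

open Classical in
/-- Nonsmooth-basis case: if `[A* f⁽ⁿ'ᵏ⁾]_l = δ_{kl}` for `k, l ∈ {0,…,n-1}` and
`∑_{k<n} |[A* f⁽ⁿ'ᵏ⁾]_l| ≤ c` for `l ≥ n` with `c ∈ [0,1)`, then for every sign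
sequence `ξ` supported in `{0,…,n-1}` the element `η = ∑_{k ∈ supp ξ} ξ_k f⁽ⁿ'ᵏ⁾`
satisfies `P_{supp ξ} A*η = ξ`, `‖(I - P_{supp ξ}) A*η‖_∞ ≤ c`, and
`‖η‖ ≤ ∑_{k<n} ‖f⁽ⁿ'ᵏ⁾‖`. -/
theorem stmt18 {Y : Type*} [NormedAddCommGroup Y] [NormedSpace ℝ Y]
    (A : L1 →L[ℝ] Y) (n : ℕ) (c : ℝ) (hc0 : 0 ≤ c) (hc1 : c < 1)
    (f : ℕ → StrongDual ℝ Y)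
    (hdelta : ∀ k ∈ Finset.range n, ∀ l ∈ Finset.range n,
      f k (A (e l)) = if l = k then 1 else 0)
    (htail : ∀ l : ℕ, n ≤ l → ∑ k ∈ Finset.range n, |f k (A (e l))| ≤ c)
    (ξ : ℕ → ℝ) (hξ : SignIn ξ (Finset.range n)) :
    (∀ j, ξ j ≠ 0 → ((Finset.range n).filter (fun k => ξ k ≠ 0)).sum
        (fun k => ξ k • f k) (A (e j)) = ξ j) ∧
    (∀ j, ξ j = 0 → |((Finset.range n).filter (fun k => ξ k ≠ 0)).sum
        (fun k => ξ k • f k) (A (e j))| ≤ c) ∧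
    ‖((Finset.range n).filter (fun k => ξ k ≠ 0)).sum (fun k => ξ k • f k)‖ ≤
        ∑ k ∈ Finset.range n, ‖f k‖ := by
  obtain ⟨hsign, hsupp⟩ := hξ
  have habs : ∀ k, |ξ k| ≤ 1 := by
    intro k; rcases hsign k with h | h | h <;> rw [h] <;> norm_num
  set S := (Finset.range n).filter (fun k => ξ k ≠ 0) with hS
  have happly : ∀ x : Y, (S.sum (fun k => ξ k • f k)) x = ∑ k ∈ S, ξ k * f k x := by
    intro x
    rw [ContinuousLinearMap.sum_apply]
    rfl
  refine ⟨?_, ?_, ?_⟩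
  · intro j hj
    have hjn : j ∈ Finset.range n := by
      by_contra h; exact hj (hsupp j h)
    have hjS : j ∈ S := Finset.mem_filter.2 ⟨hjn, hj⟩
    rw [happly]
    rw [Finset.sum_eq_single j]
    · rw [hdelta j hjn j hjn, if_pos rfl, mul_one]
    · intro k hk hkj
      have hkn := (Finset.mem_filter.1 hk).1
      rw [hdelta k hkn j hjn, if_neg (fun h => hkj h.symm), mul_zero]
    · intro h; exact absurd hjS h
  · intro j hj
    rw [happly]
    by_cases hjn : j ∈ Finset.range n
    · have : ∀ k ∈ S, ξ k * f k (A (e j)) = 0 := by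
        intro k hk
        have hkn := (Finset.mem_filter.1 hk).1
        have hkj : j ≠ k := by rintro rfl; exact (Finset.mem_filter.1 hk).2 hj
        rw [hdelta k hkn j hjn, if_neg hkj, mul_zero]
      rw [Finset.sum_eq_zero this, abs_zero]; exact hc0
    · have hjn' : n ≤ j := by simpa using hjn
      calc |∑ k ∈ S, ξ k * f k (A (e j))| ≤ ∑ k ∈ S, |ξ k * f k (A (e j))| :=
            Finset.abs_sum_le_sum_abs _ _
        _ ≤ ∑ k ∈ S, |f k (A (e j))| := by
            refine Finset.sum_le_sum fun k _ => ?_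
            rw [abs_mul]
            exact mul_le_of_le_one_left (abs_nonneg _) (habs k)
        _ ≤ ∑ k ∈ Finset.range n, |f k (A (e j))| :=
            Finset.sum_le_sum_of_subset_of_nonneg (Finset.filter_subset _ _)
              (fun k _ _ => abs_nonneg _)
        _ ≤ c := htail j hjn'
  · calc ‖S.sum (fun k => ξ k • f k)‖ ≤ ∑ k ∈ S, ‖ξ k • f k‖ := norm_sum_le _ _
      _ ≤ ∑ k ∈ S, ‖f k‖ := by
          refine Finset.sum_le_sum fun k _ => ?_
          rw [norm_smul, Real.norm_eq_abs]
          exact mul_le_of_le_one_left (norm_nonneg _) (habs k)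
      _ ≤ ∑ k ∈ Finset.range n, ‖f k‖ :=
          Finset.sum_le_sum_of_subset_of_nonneg (Finset.filter_subset _ _)
            (fun k _ _ => norm_nonneg _)
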